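/- Suppose β is a normalized nc truncated tracial sequence of degree 4 with a positive semidefinite, recursively generated moment matrix M₂ of rank 5 satisfying the column relations Y² = 1 + X² and a·1 + d·X² + e·(XY+YX) = 0, for some reals a,d,e not all zero. Then there exist reals b,c,e',f with bf − ce' ≠ 0 such that the transformed sequence β̃_w := L_β(w∘φ), where φ(X,Y) = (bX + cY, e'X + fY), has a moment matrix M̃₂ satisfying the column relation XY + YX = 0 and one of the column relations Y² = 1, X² + Y² = 1, or Y² − X² = 1. -/

import Mathlib

open Matrix BigOperators

/-- Words in the free monoid on two letters `X = 0`, `Y = 1`. -/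
abbrev Word : Type := List (Fin 2)

/-- Evaluation of a word at a pair of square matrices (`X ↦ A`, `Y ↦ B`). -/
def wEval {m : Type*} [Fintype m] [DecidableEq m] (A B : Matrix m m ℝ) : Word → Matrix m m ℝ
  | [] => 1
  | i :: w => (if i = (0 : Fin 2) then A else B) * wEval A B w

/-- Normalized trace. -/
noncomputable def nTr {m : Type*} [Fintype m] (A : Matrix m m ℝ) : ℝ :=
  A.trace / (Fintype.card m : ℝ)
/-- `v` is a cyclic permutation of `w`. -/
def IsCyc (v w : Word) : Prop := ∃ a b : Word, v = a ++ b ∧ w = b ++ a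

/-- A truncated tracial sequence of degree `2n`. -/
def IsTracialSeq (n : ℕ) (β : Word → ℝ) : Prop :=
  (∀ v w : Word, w.length ≤ 2 * n → IsCyc v w → β v = β w) ∧
  ∀ w : Word, w.length ≤ 2 * n → β w = β w.reverse

/-- `β` is noncommutative: two words with the same commutative collapse get
different values. -/
def IsNCSeq (n : ℕ) (β : Word → ℝ) : Prop :=
  ∃ v w : Word, v.length ≤ 2 * n ∧ w.length ≤ 2 * n ∧
    v.count 0 = w.count 0 ∧ v.count 1 = w.count 1 ∧ β v ≠ β w
/-- The seven words of length at most 2, in the order `1, X, Y, X², XY, YX, Y²`. -/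
def w7 : Fin 7 → Word := ![[], [0], [1], [0, 0], [0, 1], [1, 0], [1, 1]]

/-- The 7×7 moment matrix `M₂(β)`, indexed by `1, X, Y, X², XY, YX, Y²`. -/
def M2 (β : Word → ℝ) : Matrix (Fin 7) (Fin 7) ℝ :=
  Matrix.of fun i j => β ((w7 i).reverse ++ w7 j)

/-- Index of a word of length at most 2 among the seven words (junk value on
longer words). -/
def idx : Word → Fin 7
  | [] => 0
  | a :: [] => if a = 0 then 1 else 2
  | a :: b :: _ => if a = 0 then (if b = 0 then 3 else 4) else (if b = 0 then 5 else 6)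
/-- Noncommutative polynomials as finitely supported functions on words;
their product (convolution). -/
noncomputable def polyMul (p q : Word →₀ ℝ) : Word →₀ ℝ :=
  p.sum fun v a => q.sum fun w b => Finsupp.single (v ++ w) (a * b)

/-- The (nc) polynomial `p` has degree at most `k`. -/
def PDegLE (p : Word →₀ ℝ) (k : ℕ) : Prop := ∀ w ∈ p.support, w.length ≤ k
/-- Substitution `w ∘ φ` for `φ = (p₁, p₂)`: substitute `p₁` for `X` and `p₂`
for `Y` in the word `w`. -/
noncomputable def substWord (p₁ p₂ : Word →₀ ℝ) : Word → (Word →₀ ℝ)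
  | [] => Finsupp.single [] 1
  | i :: w => polyMul (if i = (0 : Fin 2) then p₁ else p₂) (substWord p₁ p₂ w)

/-- The Riesz functional `L_β`. -/
noncomputable def Lfun (β : Word → ℝ) (p : Word →₀ ℝ) : ℝ :=
  ∑ w ∈ p.support, p w * β w

/-- The degree-one nc polynomial `a + b·X + c·Y`. -/
noncomputable def linPoly (a b c : ℝ) : Word →₀ ℝ :=
  Finsupp.single [] a + Finsupp.single [0] b + Finsupp.single [1] c

/-- The transformed sequence `β̃_w = L_β(w ∘ φ)`. -/
noncomputable def transf (β : Word → ℝ) (p₁ p₂ : Word →₀ ℝ) : Word → ℝ :=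
  fun w => Lfun β (substWord p₁ p₂ w)

/-- Column relation `p(𝕏,𝕐) = 0` in `M₂(β)`. -/
def ColRel2 (β : Word → ℝ) (p : Word →₀ ℝ) : Prop :=
  ∀ v : Word, v.length ≤ 2 → ∑ w ∈ p.support, p w * β (v.reverse ++ w) = 0

/-- `M₂(β)` is recursively generated: whenever `p(𝕏,𝕐)=0` for `p` of degree ≤ 1
and `deg(pq) ≤ 2`, also `(pq)(𝕏,𝕐)=0` and `(qp)(𝕏,𝕐)=0`. -/
def RG2seq (β : Word → ℝ) : Prop :=
  ∀ p q : Word →₀ ℝ, PDegLE p 1 → PDegLE (polyMul p q) 2 → ColRel2 β p →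
    ColRel2 β (polyMul p q) ∧ ColRel2 β (polyMul q p)

lemma Lfun_def (β : Word → ℝ) (p : Word →₀ ℝ) : Lfun β p = p.sum fun w x => x * β w := rfl

@[simp] lemma Lfun_single (β : Word → ℝ) (w : Word) (x : ℝ) :
    Lfun β (Finsupp.single w x) = x * β w := by
  rw [Lfun_def, Finsupp.sum_single_index]; simp

@[simp] lemma Lfun_add (β : Word → ℝ) (p q : Word →₀ ℝ) :
    Lfun β (p + q) = Lfun β p + Lfun β q := by
  rw [Lfun_def, Lfun_def, Lfun_def, Finsupp.sum_add_index] <;> intros <;> simp [add_mul]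

@[simp] lemma polyMul_single_single (v w : Word) (x y : ℝ) :
    polyMul (Finsupp.single v x) (Finsupp.single w y) = Finsupp.single (v ++ w) (x * y) := by
  unfold polyMul
  rw [Finsupp.sum_single_index, Finsupp.sum_single_index]
  · simp
  · simp [Finsupp.sum_single_index]

@[simp] lemma polyMul_add_left (p q r : Word →₀ ℝ) :
    polyMul (p + q) r = polyMul p r + polyMul q r := by
  unfold polyMul
  rw [Finsupp.sum_add_index] <;> intros <;> simp [add_mul, Finsupp.sum_add]

@[simp] lemma polyMul_add_right (p q r : Word →₀ ℝ) :
    polyMul p (q + r) = polyMul p q + polyMul p r := by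
  unfold polyMul
  rw [← Finsupp.sum_add]
  congr 1; ext v a
  rw [Finsupp.sum_add_index] <;> intros <;> simp [mul_add]

lemma linPoly_eq (b c : ℝ) : linPoly 0 b c = Finsupp.single [0] b + Finsupp.single [1] c := by
  unfold linPoly; simp

lemma masterKey (β : Word → ℝ) (a d e b c e' f s0 dl rx : ℝ)
    (hE1 : ∀ i : Fin 7, β (w7 i ++ [1,1]) = β (w7 i) + β (w7 i ++ [0,0]))
    (hE2 : ∀ i : Fin 7, a * β (w7 i) + d * β (w7 i ++ [0,0]) + e * (β (w7 i ++ [0,1]) + β (w7 i ++ [1,0])) = 0)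
    (k1 : b*e' = s0*(d-a)) (k2 : b*f + c*e' = 2*s0*e) (k3 : c*f = s0*a)
    (k4 : rx*b^2 + e'^2 = dl*d - (1+dl*a)) (k5 : rx*b*c + e'*f = dl*e) (k6 : rx*c^2 + f^2 = 1+dl*a) :
    (∀ i : Fin 7, M2 (transf β (linPoly 0 b c) (linPoly 0 e' f)) i 4 + M2 (transf β (linPoly 0 b c) (linPoly 0 e' f)) i 5 = 0) ∧
    (∀ i : Fin 7, rx * M2 (transf β (linPoly 0 b c) (linPoly 0 e' f)) i 3 + M2 (transf β (linPoly 0 b c) (linPoly 0 e' f)) i 6 = M2 (transf β (linPoly 0 b c) (linPoly 0 e' f)) i 0) := by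
  have e1_0 : β [1, 1] = β [] + β [0, 0] := by simpa [w7] using hE1 0
  have e2_0 : a * β [] + d * β [0, 0] + e * (β [0, 1] + β [1, 0]) = 0 := by simpa [w7] using hE2 0
  have e1_1 : β [0, 1, 1] = β [0] + β [0, 0, 0] := by simpa [w7] using hE1 1
  have e2_1 : a * β [0] + d * β [0, 0, 0] + e * (β [0, 0, 1] + β [0, 1, 0]) = 0 := by simpa [w7] using hE2 1
  have e1_2 : β [1, 1, 1] = β [1] + β [1, 0, 0] := by simpa [w7] using hE1 2
  have e2_2 : a * β [1] + d * β [1, 0, 0] + e * (β [1, 0, 1] + β [1, 1, 0]) = 0 := by simpa [w7] using hE2 2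
  have e1_3 : β [0, 0, 1, 1] = β [0, 0] + β [0, 0, 0, 0] := by simpa [w7] using hE1 3
  have e2_3 : a * β [0, 0] + d * β [0, 0, 0, 0] + e * (β [0, 0, 0, 1] + β [0, 0, 1, 0]) = 0 := by simpa [w7] using hE2 3
  have e1_4 : β [0, 1, 1, 1] = β [0, 1] + β [0, 1, 0, 0] := by simpa [w7] using hE1 4
  have e2_4 : a * β [0, 1] + d * β [0, 1, 0, 0] + e * (β [0, 1, 0, 1] + β [0, 1, 1, 0]) = 0 := by simpa [w7] using hE2 4
  have e1_5 : β [1, 0, 1, 1] = β [1, 0] + β [1, 0, 0, 0] := by simpa [w7] using hE1 5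
  have e2_5 : a * β [1, 0] + d * β [1, 0, 0, 0] + e * (β [1, 0, 0, 1] + β [1, 0, 1, 0]) = 0 := by simpa [w7] using hE2 5
  have e1_6 : β [1, 1, 1, 1] = β [1, 1] + β [1, 1, 0, 0] := by simpa [w7] using hE1 6
  have e2_6 : a * β [1, 1] + d * β [1, 1, 0, 0] + e * (β [1, 1, 0, 1] + β [1, 1, 1, 0]) = 0 := by simpa [w7] using hE2 6
  constructor <;> intro i <;> fin_cases i
  · simp [M2, transf, w7, linPoly_eq, substWord, -Finsupp.single_mul]
    linear_combination
        (2*s0*a*1) * e1_0 + (2*s0*1) * e2_0 + (2*1*β [0, 0]) * k1 + (1*(β [0, 1] + β [1, 0])) * k2 + (2*1*β [1, 1]) * k3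
  · simp [M2, transf, w7, linPoly_eq, substWord, -Finsupp.single_mul]
    linear_combination
        (2*s0*a*b) * e1_1 + (2*s0*b) * e2_1 + (2*b*β [0, 0, 0]) * k1 + (b*(β [0, 0, 1] + β [0, 1, 0])) * k2 + (2*b*β [0, 1, 1]) * k3 +
        (2*s0*a*c) * e1_2 + (2*s0*c) * e2_2 + (2*c*β [1, 0, 0]) * k1 + (c*(β [1, 0, 1] + β [1, 1, 0])) * k2 + (2*c*β [1, 1, 1]) * k3
  · simp [M2, transf, w7, linPoly_eq, substWord, -Finsupp.single_mul]
    linear_combination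
        (2*s0*a*e') * e1_1 + (2*s0*e') * e2_1 + (2*e'*β [0, 0, 0]) * k1 + (e'*(β [0, 0, 1] + β [0, 1, 0])) * k2 + (2*e'*β [0, 1, 1]) * k3 +
        (2*s0*a*f) * e1_2 + (2*s0*f) * e2_2 + (2*f*β [1, 0, 0]) * k1 + (f*(β [1, 0, 1] + β [1, 1, 0])) * k2 + (2*f*β [1, 1, 1]) * k3
  · simp [M2, transf, w7, linPoly_eq, substWord, -Finsupp.single_mul]
    linear_combination
        (2*s0*a*b*b) * e1_3 + (2*s0*b*b) * e2_3 + (2*b*b*β [0, 0, 0, 0]) * k1 + (b*b*(β [0, 0, 0, 1] + β [0, 0, 1, 0])) * k2 + (2*b*b*β [0, 0, 1, 1]) * k3 +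
        (2*s0*a*b*c) * e1_4 + (2*s0*b*c) * e2_4 + (2*b*c*β [0, 1, 0, 0]) * k1 + (b*c*(β [0, 1, 0, 1] + β [0, 1, 1, 0])) * k2 + (2*b*c*β [0, 1, 1, 1]) * k3 +
        (2*s0*a*c*b) * e1_5 + (2*s0*c*b) * e2_5 + (2*c*b*β [1, 0, 0, 0]) * k1 + (c*b*(β [1, 0, 0, 1] + β [1, 0, 1, 0])) * k2 + (2*c*b*β [1, 0, 1, 1]) * k3 +
        (2*s0*a*c*c) * e1_6 + (2*s0*c*c) * e2_6 + (2*c*c*β [1, 1, 0, 0]) * k1 + (c*c*(β [1, 1, 0, 1] + β [1, 1, 1, 0])) * k2 + (2*c*c*β [1, 1, 1, 1]) * k3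
  · simp [M2, transf, w7, linPoly_eq, substWord, -Finsupp.single_mul]
    linear_combination
        (2*s0*a*e'*b) * e1_3 + (2*s0*e'*b) * e2_3 + (2*e'*b*β [0, 0, 0, 0]) * k1 + (e'*b*(β [0, 0, 0, 1] + β [0, 0, 1, 0])) * k2 + (2*e'*b*β [0, 0, 1, 1]) * k3 +
        (2*s0*a*e'*c) * e1_4 + (2*s0*e'*c) * e2_4 + (2*e'*c*β [0, 1, 0, 0]) * k1 + (e'*c*(β [0, 1, 0, 1] + β [0, 1, 1, 0])) * k2 + (2*e'*c*β [0, 1, 1, 1]) * k3 +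
        (2*s0*a*f*b) * e1_5 + (2*s0*f*b) * e2_5 + (2*f*b*β [1, 0, 0, 0]) * k1 + (f*b*(β [1, 0, 0, 1] + β [1, 0, 1, 0])) * k2 + (2*f*b*β [1, 0, 1, 1]) * k3 +
        (2*s0*a*f*c) * e1_6 + (2*s0*f*c) * e2_6 + (2*f*c*β [1, 1, 0, 0]) * k1 + (f*c*(β [1, 1, 0, 1] + β [1, 1, 1, 0])) * k2 + (2*f*c*β [1, 1, 1, 1]) * k3
  · simp [M2, transf, w7, linPoly_eq, substWord, -Finsupp.single_mul]
    linear_combination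
        (2*s0*a*b*e') * e1_3 + (2*s0*b*e') * e2_3 + (2*b*e'*β [0, 0, 0, 0]) * k1 + (b*e'*(β [0, 0, 0, 1] + β [0, 0, 1, 0])) * k2 + (2*b*e'*β [0, 0, 1, 1]) * k3 +
        (2*s0*a*b*f) * e1_4 + (2*s0*b*f) * e2_4 + (2*b*f*β [0, 1, 0, 0]) * k1 + (b*f*(β [0, 1, 0, 1] + β [0, 1, 1, 0])) * k2 + (2*b*f*β [0, 1, 1, 1]) * k3 +
        (2*s0*a*c*e') * e1_5 + (2*s0*c*e') * e2_5 + (2*c*e'*β [1, 0, 0, 0]) * k1 + (c*e'*(β [1, 0, 0, 1] + β [1, 0, 1, 0])) * k2 + (2*c*e'*β [1, 0, 1, 1]) * k3 +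
        (2*s0*a*c*f) * e1_6 + (2*s0*c*f) * e2_6 + (2*c*f*β [1, 1, 0, 0]) * k1 + (c*f*(β [1, 1, 0, 1] + β [1, 1, 1, 0])) * k2 + (2*c*f*β [1, 1, 1, 1]) * k3
  · simp [M2, transf, w7, linPoly_eq, substWord, -Finsupp.single_mul]
    linear_combination
        (2*s0*a*e'*e') * e1_3 + (2*s0*e'*e') * e2_3 + (2*e'*e'*β [0, 0, 0, 0]) * k1 + (e'*e'*(β [0, 0, 0, 1] + β [0, 0, 1, 0])) * k2 + (2*e'*e'*β [0, 0, 1, 1]) * k3 +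
        (2*s0*a*e'*f) * e1_4 + (2*s0*e'*f) * e2_4 + (2*e'*f*β [0, 1, 0, 0]) * k1 + (e'*f*(β [0, 1, 0, 1] + β [0, 1, 1, 0])) * k2 + (2*e'*f*β [0, 1, 1, 1]) * k3 +
        (2*s0*a*f*e') * e1_5 + (2*s0*f*e') * e2_5 + (2*f*e'*β [1, 0, 0, 0]) * k1 + (f*e'*(β [1, 0, 0, 1] + β [1, 0, 1, 0])) * k2 + (2*f*e'*β [1, 0, 1, 1]) * k3 +
        (2*s0*a*f*f) * e1_6 + (2*s0*f*f) * e2_6 + (2*f*f*β [1, 1, 0, 0]) * k1 + (f*f*(β [1, 1, 0, 1] + β [1, 1, 1, 0])) * k2 + (2*f*f*β [1, 1, 1, 1]) * k3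
  · simp [M2, transf, w7, linPoly_eq, substWord, -Finsupp.single_mul]
    linear_combination
        ((1+dl*a)*1) * e1_0 + (dl*1) * e2_0 + (1*β [0, 0]) * k4 + (1*(β [0, 1] + β [1, 0])) * k5 + (1*β [1, 1]) * k6
  · simp [M2, transf, w7, linPoly_eq, substWord, -Finsupp.single_mul]
    linear_combination
        ((1+dl*a)*b) * e1_1 + (dl*b) * e2_1 + (b*β [0, 0, 0]) * k4 + (b*(β [0, 0, 1] + β [0, 1, 0])) * k5 + (b*β [0, 1, 1]) * k6 +
        ((1+dl*a)*c) * e1_2 + (dl*c) * e2_2 + (c*β [1, 0, 0]) * k4 + (c*(β [1, 0, 1] + β [1, 1, 0])) * k5 + (c*β [1, 1, 1]) * k6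
  · simp [M2, transf, w7, linPoly_eq, substWord, -Finsupp.single_mul]
    linear_combination
        ((1+dl*a)*e') * e1_1 + (dl*e') * e2_1 + (e'*β [0, 0, 0]) * k4 + (e'*(β [0, 0, 1] + β [0, 1, 0])) * k5 + (e'*β [0, 1, 1]) * k6 +
        ((1+dl*a)*f) * e1_2 + (dl*f) * e2_2 + (f*β [1, 0, 0]) * k4 + (f*(β [1, 0, 1] + β [1, 1, 0])) * k5 + (f*β [1, 1, 1]) * k6
  · simp [M2, transf, w7, linPoly_eq, substWord, -Finsupp.single_mul]
    linear_combination
        ((1+dl*a)*b*b) * e1_3 + (dl*b*b) * e2_3 + (b*b*β [0, 0, 0, 0]) * k4 + (b*b*(β [0, 0, 0, 1] + β [0, 0, 1, 0])) * k5 + (b*b*β [0, 0, 1, 1]) * k6 +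
        ((1+dl*a)*b*c) * e1_4 + (dl*b*c) * e2_4 + (b*c*β [0, 1, 0, 0]) * k4 + (b*c*(β [0, 1, 0, 1] + β [0, 1, 1, 0])) * k5 + (b*c*β [0, 1, 1, 1]) * k6 +
        ((1+dl*a)*c*b) * e1_5 + (dl*c*b) * e2_5 + (c*b*β [1, 0, 0, 0]) * k4 + (c*b*(β [1, 0, 0, 1] + β [1, 0, 1, 0])) * k5 + (c*b*β [1, 0, 1, 1]) * k6 +
        ((1+dl*a)*c*c) * e1_6 + (dl*c*c) * e2_6 + (c*c*β [1, 1, 0, 0]) * k4 + (c*c*(β [1, 1, 0, 1] + β [1, 1, 1, 0])) * k5 + (c*c*β [1, 1, 1, 1]) * k6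
  · simp [M2, transf, w7, linPoly_eq, substWord, -Finsupp.single_mul]
    linear_combination
        ((1+dl*a)*e'*b) * e1_3 + (dl*e'*b) * e2_3 + (e'*b*β [0, 0, 0, 0]) * k4 + (e'*b*(β [0, 0, 0, 1] + β [0, 0, 1, 0])) * k5 + (e'*b*β [0, 0, 1, 1]) * k6 +
        ((1+dl*a)*e'*c) * e1_4 + (dl*e'*c) * e2_4 + (e'*c*β [0, 1, 0, 0]) * k4 + (e'*c*(β [0, 1, 0, 1] + β [0, 1, 1, 0])) * k5 + (e'*c*β [0, 1, 1, 1]) * k6 +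
        ((1+dl*a)*f*b) * e1_5 + (dl*f*b) * e2_5 + (f*b*β [1, 0, 0, 0]) * k4 + (f*b*(β [1, 0, 0, 1] + β [1, 0, 1, 0])) * k5 + (f*b*β [1, 0, 1, 1]) * k6 +
        ((1+dl*a)*f*c) * e1_6 + (dl*f*c) * e2_6 + (f*c*β [1, 1, 0, 0]) * k4 + (f*c*(β [1, 1, 0, 1] + β [1, 1, 1, 0])) * k5 + (f*c*β [1, 1, 1, 1]) * k6
  · simp [M2, transf, w7, linPoly_eq, substWord, -Finsupp.single_mul]
    linear_combination
        ((1+dl*a)*b*e') * e1_3 + (dl*b*e') * e2_3 + (b*e'*β [0, 0, 0, 0]) * k4 + (b*e'*(β [0, 0, 0, 1] + β [0, 0, 1, 0])) * k5 + (b*e'*β [0, 0, 1, 1]) * k6 +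
        ((1+dl*a)*b*f) * e1_4 + (dl*b*f) * e2_4 + (b*f*β [0, 1, 0, 0]) * k4 + (b*f*(β [0, 1, 0, 1] + β [0, 1, 1, 0])) * k5 + (b*f*β [0, 1, 1, 1]) * k6 +
        ((1+dl*a)*c*e') * e1_5 + (dl*c*e') * e2_5 + (c*e'*β [1, 0, 0, 0]) * k4 + (c*e'*(β [1, 0, 0, 1] + β [1, 0, 1, 0])) * k5 + (c*e'*β [1, 0, 1, 1]) * k6 +
        ((1+dl*a)*c*f) * e1_6 + (dl*c*f) * e2_6 + (c*f*β [1, 1, 0, 0]) * k4 + (c*f*(β [1, 1, 0, 1] + β [1, 1, 1, 0])) * k5 + (c*f*β [1, 1, 1, 1]) * k6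
  · simp [M2, transf, w7, linPoly_eq, substWord, -Finsupp.single_mul]
    linear_combination
        ((1+dl*a)*e'*e') * e1_3 + (dl*e'*e') * e2_3 + (e'*e'*β [0, 0, 0, 0]) * k4 + (e'*e'*(β [0, 0, 0, 1] + β [0, 0, 1, 0])) * k5 + (e'*e'*β [0, 0, 1, 1]) * k6 +
        ((1+dl*a)*e'*f) * e1_4 + (dl*e'*f) * e2_4 + (e'*f*β [0, 1, 0, 0]) * k4 + (e'*f*(β [0, 1, 0, 1] + β [0, 1, 1, 0])) * k5 + (e'*f*β [0, 1, 1, 1]) * k6 +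
        ((1+dl*a)*f*e') * e1_5 + (dl*f*e') * e2_5 + (f*e'*β [1, 0, 0, 0]) * k4 + (f*e'*(β [1, 0, 0, 1] + β [1, 0, 1, 0])) * k5 + (f*e'*β [1, 0, 1, 1]) * k6 +
        ((1+dl*a)*f*f) * e1_6 + (dl*f*f) * e2_6 + (f*f*β [1, 1, 0, 0]) * k4 + (f*f*(β [1, 1, 0, 1] + β [1, 1, 1, 0])) * k5 + (f*f*β [1, 1, 1, 1]) * k6


lemma construct (β : Word → ℝ) (a d e : ℝ)
    (hE1 : ∀ i : Fin 7, β (w7 i ++ [1,1]) = β (w7 i) + β (w7 i ++ [0,0]))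
    (hE2 : ∀ i : Fin 7, a * β (w7 i) + d * β (w7 i ++ [0,0]) + e * (β (w7 i ++ [0,1]) + β (w7 i ++ [1,0])) = 0)
    (b1 c1 b2 c2 al om dl t0 W : ℝ) (hW : 0 < W) (hom : 0 < om)
    (P0a : b1*b2 = t0*(d-a)) (P0b : b1*c2 + c1*b2 = 2*t0*e) (P0c : c1*c2 = t0*a)
    (CI1 : al*b1^2 + om*b2^2 = (dl*(d-a) - 1)*W)
    (CI2 : al*(b1*c1) + om*(b2*c2) = dl*e*W)
    (CI3 : al*c1^2 + om*c2^2 = (1 + dl*a)*W)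
    (hdet : b1*c2 - c1*b2 ≠ 0) :
    ∃ b c e' f : ℝ, b * f - c * e' ≠ 0 ∧
      (∀ i : Fin 7,
          M2 (transf β (linPoly 0 b c) (linPoly 0 e' f)) i 4 +
            M2 (transf β (linPoly 0 b c) (linPoly 0 e' f)) i 5 = 0) ∧
      ((∀ i : Fin 7, M2 (transf β (linPoly 0 b c) (linPoly 0 e' f)) i 6 =
          M2 (transf β (linPoly 0 b c) (linPoly 0 e' f)) i 0) ∨
       (∀ i : Fin 7, M2 (transf β (linPoly 0 b c) (linPoly 0 e' f)) i 3 +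
          M2 (transf β (linPoly 0 b c) (linPoly 0 e' f)) i 6 =
          M2 (transf β (linPoly 0 b c) (linPoly 0 e' f)) i 0) ∨
       (∀ i : Fin 7, M2 (transf β (linPoly 0 b c) (linPoly 0 e' f)) i 6 -
          M2 (transf β (linPoly 0 b c) (linPoly 0 e' f)) i 3 =
          M2 (transf β (linPoly 0 b c) (linPoly 0 e' f)) i 0)) := by
  have hWne : W ≠ 0 := ne_of_gt hW
  set l2 : ℝ := Real.sqrt (om / W) with hl2def
  have hl2pos : 0 < l2 := Real.sqrt_pos.mpr (div_pos hom hW)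
  have hl2c : l2^2 * W = om := by
    rw [hl2def, Real.sq_sqrt (le_of_lt (div_pos hom hW))]
    field_simp
  rcases lt_trichotomy al 0 with hal | hal | hal
  · -- rx = -1, third disjunct
    set l1 : ℝ := Real.sqrt (-al / W) with hl1def
    have hl1pos : 0 < l1 := Real.sqrt_pos.mpr (div_pos (by linarith) hW)
    have hl1c : (-1 : ℝ) * (l1^2 * W) = al := by
      rw [hl1def, Real.sq_sqrt (le_of_lt (div_pos (by linarith) hW))]
      field_simp
    obtain ⟨H1, H2⟩ := masterKey β a d e (l1*b1) (l1*c1) (l2*b2) (l2*c2) (l1*l2*t0) dl (-1)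
      hE1 hE2
      (by linear_combination l1*l2*P0a) (by linear_combination l1*l2*P0b)
      (by linear_combination l1*l2*P0c)
      (mul_right_cancel₀ hWne (by linear_combination b1^2*hl1c + b2^2*hl2c + CI1))
      (mul_right_cancel₀ hWne (by linear_combination (b1*c1)*hl1c + (b2*c2)*hl2c + CI2))
      (mul_right_cancel₀ hWne (by linear_combination c1^2*hl1c + c2^2*hl2c + CI3))
    refine ⟨l1*b1, l1*c1, l2*b2, l2*c2, ?_, H1, Or.inr (Or.inr (fun i => by
      have := H2 i; linarith))⟩
    have hne : (l1*b1)*(l2*c2) - (l1*c1)*(l2*b2) = l1*l2*(b1*c2 - c1*b2) := by ring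
    rw [hne]
    exact mul_ne_zero (mul_ne_zero (ne_of_gt hl1pos) (ne_of_gt hl2pos)) hdet
  · -- rx = 0, first disjunct
    have hl1c : (0 : ℝ) * ((1:ℝ)^2 * W) = al := by simpa using hal.symm
    obtain ⟨H1, H2⟩ := masterKey β a d e (1*b1) (1*c1) (l2*b2) (l2*c2) (1*l2*t0) dl 0
      hE1 hE2
      (by linear_combination 1*l2*P0a) (by linear_combination 1*l2*P0b)
      (by linear_combination 1*l2*P0c)
      (mul_right_cancel₀ hWne (by linear_combination b1^2*hl1c + b2^2*hl2c + CI1))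
      (mul_right_cancel₀ hWne (by linear_combination (b1*c1)*hl1c + (b2*c2)*hl2c + CI2))
      (mul_right_cancel₀ hWne (by linear_combination c1^2*hl1c + c2^2*hl2c + CI3))
    refine ⟨1*b1, 1*c1, l2*b2, l2*c2, ?_, H1, Or.inl (fun i => by
      have := H2 i; linarith)⟩
    have hne : (1*b1)*(l2*c2) - (1*c1)*(l2*b2) = 1*l2*(b1*c2 - c1*b2) := by ring
    rw [hne]
    exact mul_ne_zero (mul_ne_zero one_ne_zero (ne_of_gt hl2pos)) hdet
  · -- rx = 1, second disjunct
    set l1 : ℝ := Real.sqrt (al / W) with hl1def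
    have hl1pos : 0 < l1 := Real.sqrt_pos.mpr (div_pos hal hW)
    have hl1c : (1 : ℝ) * (l1^2 * W) = al := by
      rw [hl1def, Real.sq_sqrt (le_of_lt (div_pos hal hW))]
      field_simp
    obtain ⟨H1, H2⟩ := masterKey β a d e (l1*b1) (l1*c1) (l2*b2) (l2*c2) (l1*l2*t0) dl 1
      hE1 hE2
      (by linear_combination l1*l2*P0a) (by linear_combination l1*l2*P0b)
      (by linear_combination l1*l2*P0c)
      (mul_right_cancel₀ hWne (by linear_combination b1^2*hl1c + b2^2*hl2c + CI1))
      (mul_right_cancel₀ hWne (by linear_combination (b1*c1)*hl1c + (b2*c2)*hl2c + CI2))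
      (mul_right_cancel₀ hWne (by linear_combination c1^2*hl1c + c2^2*hl2c + CI3))
    refine ⟨l1*b1, l1*c1, l2*b2, l2*c2, ?_, H1, Or.inr (Or.inl (fun i => by
      have := H2 i; linarith))⟩
    have hne : (l1*b1)*(l2*c2) - (l1*c1)*(l2*b2) = l1*l2*(b1*c2 - c1*b2) := by ring
    rw [hne]
    exact mul_ne_zero (mul_ne_zero (ne_of_gt hl1pos) (ne_of_gt hl2pos)) hdet


noncomputable def uv (s t : ℝ) : Fin 7 → ℝ := fun j => if j = 1 then s else if j = 2 then t else 0
noncomputable def kv1 (x0 x3 x6 : ℝ) : Fin 7 → ℝ := fun j => if j = 0 then x0 else if j = 3 then x3 else if j = 6 then x6 else 0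
noncomputable def kv2 (x0 x3 x4 : ℝ) : Fin 7 → ℝ := fun j => if j = 0 then x0 else if j = 3 then x3 else if j = 4 then x4 else if j = 5 then x4 else 0

lemma qf_eq (β : Word → ℝ) (s t : ℝ) : (uv s t) ⬝ᵥ (M2 β) *ᵥ (uv s t)
    = s^2*β [0, 0] + s*t*(β [0, 1] + β [1, 0]) + t^2*β [1, 1] := by
  simp [dotProduct, Matrix.mulVec, M2, w7, Fin.sum_univ_seven, uv]
  ring

lemma psd_null {M : Matrix (Fin 7) (Fin 7) ℝ} (h : M.PosSemidef) (x : Fin 7 → ℝ)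
    (hx : x ⬝ᵥ M *ᵥ x = 0) : M *ᵥ x = 0 := by
  exact (h.dotProduct_mulVec_zero_iff x).mp (by simpa using hx)

lemma ker3 {M : Matrix (Fin 7) (Fin 7) ℝ} (hrank : M.rank = 5)
    (v : Fin 3 → Fin 7 → ℝ) (hli : LinearIndependent ℝ v)
    (hker : ∀ i, M *ᵥ v i = 0) : False := by
  have hsub : Submodule.span ℝ (Set.range v) ≤ LinearMap.ker M.mulVecLin := by
    rw [Submodule.span_le]
    rintro x ⟨i, rfl⟩
    simpa [LinearMap.mem_ker, Matrix.mulVecLin_apply] using hker i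
  have h1 : Module.finrank ℝ (Submodule.span ℝ (Set.range v)) = 3 := by
    rw [finrank_span_eq_card hli]; simp
  have h2 : 3 ≤ Module.finrank ℝ (LinearMap.ker M.mulVecLin) := h1 ▸ Submodule.finrank_mono hsub
  have h3 := LinearMap.finrank_range_add_finrank_ker M.mulVecLin
  rw [show Module.finrank ℝ (LinearMap.range M.mulVecLin) = M.rank from rfl] at h3
  rw [hrank, Module.finrank_pi] at h3
  simp at h3
  omega

lemma sq_pos' (x : ℝ) (hx : x ≠ 0) : 0 < x^2 :=
  lt_of_le_of_ne (sq_nonneg x) (Ne.symm (pow_ne_zero 2 hx))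

set_option maxHeartbeats 1000000 in
theorem stmt6 (β : Word → ℝ) (hβ : IsTracialSeq 2 β) (hnorm : β [] = 1)
    (hnc : IsNCSeq 2 β) (hpsd : (M2 β).PosSemidef) (hrg : RG2seq β)
    (hrank : (M2 β).rank = 5) (a d e : ℝ) (hade : ¬(a = 0 ∧ d = 0 ∧ e = 0))
    (hrel1 : ∀ i : Fin 7, M2 β i 6 = M2 β i 0 + M2 β i 3)
    (hrel2 : ∀ i : Fin 7, a * M2 β i 0 + d * M2 β i 3 + e * (M2 β i 4 + M2 β i 5) = 0) :
    ∃ b c e' f : ℝ, b * f - c * e' ≠ 0 ∧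
      (∀ i : Fin 7,
          M2 (transf β (linPoly 0 b c) (linPoly 0 e' f)) i 4 +
            M2 (transf β (linPoly 0 b c) (linPoly 0 e' f)) i 5 = 0) ∧
      ((∀ i : Fin 7, M2 (transf β (linPoly 0 b c) (linPoly 0 e' f)) i 6 =
          M2 (transf β (linPoly 0 b c) (linPoly 0 e' f)) i 0) ∨
       (∀ i : Fin 7, M2 (transf β (linPoly 0 b c) (linPoly 0 e' f)) i 3 +
          M2 (transf β (linPoly 0 b c) (linPoly 0 e' f)) i 6 =
          M2 (transf β (linPoly 0 b c) (linPoly 0 e' f)) i 0) ∨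
       (∀ i : Fin 7, M2 (transf β (linPoly 0 b c) (linPoly 0 e' f)) i 6 -
          M2 (transf β (linPoly 0 b c) (linPoly 0 e' f)) i 3 =
          M2 (transf β (linPoly 0 b c) (linPoly 0 e' f)) i 0)) := by
  have hE1 : ∀ i : Fin 7, β (w7 i ++ [1,1]) = β (w7 i) + β (w7 i ++ [0,0]) := by
    intro i
    fin_cases i
    · simpa [M2, w7] using hrel1 0
    · simpa [M2, w7] using hrel1 1
    · simpa [M2, w7] using hrel1 2
    · simpa [M2, w7] using hrel1 3
    · simpa [M2, w7] using hrel1 5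
    · simpa [M2, w7] using hrel1 4
    · simpa [M2, w7] using hrel1 6
  have hE2 : ∀ i : Fin 7, a * β (w7 i) + d * β (w7 i ++ [0,0])
      + e * (β (w7 i ++ [0,1]) + β (w7 i ++ [1,0])) = 0 := by
    intro i
    fin_cases i
    · simpa [M2, w7] using hrel2 0
    · simpa [M2, w7] using hrel2 1
    · simpa [M2, w7] using hrel2 2
    · simpa [M2, w7] using hrel2 3
    · simpa [M2, w7] using hrel2 5
    · simpa [M2, w7] using hrel2 4
    · simpa [M2, w7] using hrel2 6
  have e10 : β [1, 1] = β [] + β [0, 0] := by simpa [w7] using hE1 0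
  have e20 : a * β [] + d * β [0, 0] + e * (β [0, 1] + β [1, 0]) = 0 := by simpa [w7] using hE2 0
  have lh : (d - a) * β [0, 0] + e * (β [0, 1] + β [1, 0]) + a * β [1, 1] = 0 := by
    linear_combination a * e10 + e20
  have hq : ∀ s t : ℝ, 0 ≤ s^2*β [0, 0] + s*t*(β [0, 1] + β [1, 0]) + t^2*β [1, 1] := by
    intro s t
    have h := hpsd.dotProduct_mulVec_nonneg (uv s t)
    have hst : star (uv s t) = uv s t := funext fun i => star_trivial _
    rwa [hst, qf_eq] at h
  have hb11 : 0 ≤ β [1, 1] := by have := hq 0 1; nlinarith [hq 0 1]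
  have hker0 : ∀ s t : ℝ, ¬(s = 0 ∧ t = 0) →
      s^2*β [0, 0] + s*t*(β [0, 1] + β [1, 0]) + t^2*β [1, 1] = 0 → False := by
    intro s t hst h0
    have hu : (M2 β) *ᵥ (uv s t) = 0 := psd_null hpsd _ (by rw [qf_eq]; exact h0)
    have hv1 : (M2 β) *ᵥ (kv1 (-1) (-1) 1) = 0 := by
      funext i
      simp [Matrix.mulVec, dotProduct, Fin.sum_univ_seven, kv1]
      linear_combination hrel1 i
    have hv2 : (M2 β) *ᵥ (kv2 a d e) = 0 := by
      funext i
      simp [Matrix.mulVec, dotProduct, Fin.sum_univ_seven, kv2]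
      linear_combination hrel2 i
    apply ker3 hrank ![uv s t, kv1 (-1) (-1) 1, kv2 a d e] ?_ ?_
    · rw [Fintype.linearIndependent_iff]
      intro g hg
      have c0 := congrFun hg 0
      have c1 := congrFun hg 1
      have c2 := congrFun hg 2
      have c3 := congrFun hg 3
      have c4 := congrFun hg 4
      have c6 := congrFun hg 6
      simp [uv, kv1, kv2, Fin.sum_univ_three, Matrix.vecHead, Matrix.vecTail] at c0 c1 c2 c3 c4 c6
      have hg0 : g 0 = 0 := by
        rcases not_and_or.mp hst with hs | ht
        · exact c1.resolve_right hs
        · exact c2.resolve_right ht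
      have hg1 : g 1 = 0 := by linarith [c6]
      have hg2 : g 2 = 0 := by
        by_contra hg2
        refine hade ⟨?_, ?_, ?_⟩
        · rcases mul_eq_zero.mp (show g 2 * a = 0 by linarith) with h | h
          · exact absurd h hg2
          · exact h
        · rcases mul_eq_zero.mp (show g 2 * d = 0 by linarith [c3]) with h | h
          · exact absurd h hg2
          · exact h
        · exact c4.resolve_left hg2
      intro i
      fin_cases i <;> assumption
    · intro i
      fin_cases i
      · simpa using hu
      · simpa using hv1
      · simpa using hv2
  set Dv : ℝ := e^2 + a^2 - a*d with hDveq
  have hD : 0 < Dv := by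
    rcases eq_or_ne (d - a) 0 with hA0 | hA0
    · by_cases he : e = 0
      · exfalso
        have had : d = a := by linarith
        have ha : a ≠ 0 := by
          intro ha0
          exact hade ⟨ha0, by rw [had, ha0], he⟩
        have b11z : β [1, 1] = 0 := by
          have := lh
          rw [hA0, he] at this
          simpa [ha] using this
        exact hker0 0 1 (by simp) (by linear_combination b11z)
      · have h1 : 0 < e^2 := sq_pos' e he
        have had : d = a := by linarith
        rw [hDveq, had]; nlinarith
    · by_contra hcon
      push_neg at hcon
      have key : (d-a)^2*β [0, 0] + (d-a)*e*(β [0, 1] + β [1, 0]) + e^2*β [1, 1]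
          = Dv*β [1, 1] := by
        rw [hDveq]; linear_combination (d-a)*lh
      have h1 := hq (d-a) e
      have h2 : Dv*β [1, 1] ≤ 0 := by nlinarith [mul_nonneg (neg_nonneg.mpr hcon) hb11]
      exact hker0 (d-a) e (fun hc => hA0 hc.1) (by linarith)
  have hDne : Dv ≠ 0 := ne_of_gt hD
  rcases eq_or_ne (d - a) 0 with hA0 | hA0
  · -- degenerate case d = a
    have he : e ≠ 0 := by
      intro he0
      apply hDne
      have had : d = a := by linarith
      rw [hDveq, he0, had]; ring
    have h4e : 0 < 4*e^2 := by have := sq_pos' e he; linarith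
    have hom : 0 < 4*e^2 - a^2 := by
      by_contra hno
      push_neg at hno
      have hsF : (4*e^2 - a^2)*β [1, 1]
          - ((2*e)^2*β [0, 0] + (2*e)*a*(β [0, 1] + β [1, 0]) + a^2*β [1, 1]) = 4*e^2 := by
        linear_combination (4*e^2)*e10 + (4*e^2)*hnorm + (-2*a)*lh + (2*a*β [0, 0])*hA0
      have h2 := hq (2*e) a
      nlinarith [mul_nonneg (neg_nonneg.mpr hno) hb11]
    refine construct β a d e hE1 hE2 (2*e) a 0 1 (-1) (4*e^2 - a^2) (-a/(2*e^2)) 1 (4*e^2)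
      h4e hom ?_ ?_ ?_ ?_ ?_ ?_ ?_
    · linear_combination -hA0
    · ring
    · ring
    · rw [hA0]; ring
    · field_simp; ring
    · field_simp; ring
    · intro h; apply he; linarith
  · -- main case d ≠ a
    set r : ℝ := Real.sqrt Dv with hrdef
    have hr2 : r^2 = Dv := Real.sq_sqrt hD.le
    have hrpos : 0 < r := Real.sqrt_pos.mpr hD
    have hA2 : 0 < (d-a)^2 := sq_pos' _ hA0
    have hW : 0 < 4*Dv*(d-a)^2 := by nlinarith
    have CI1c : ((d-a)^2 - (e+r)^2)*(d-a)^2 + ((d-a)^2 - (e-r)^2)*(d-a)^2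
        = 2*(d-a)^3*(d-2*a) - 4*Dv*(d-a)^2 := by
      linear_combination (-2*(d-a)^2)*hr2 + (2*(d-a)^2)*hDveq
    have CI2c : ((d-a)^2 - (e+r)^2)*((d-a)*(e-r)) + ((d-a)^2 - (e-r)^2)*((d-a)*(e+r))
        = 2*(d-a)^2*e*(d-2*a) := by
      linear_combination (2*(d-a)*e)*hr2 + (2*(d-a)*e)*hDveq
    have CI3c : ((d-a)^2 - (e+r)^2)*(e-r)^2 + ((d-a)^2 - (e-r)^2)*(e+r)^2
        = 4*Dv*(d-a)^2 + 2*(d-a)^2*a*(d-2*a) := by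
      linear_combination (2*(d-a)^2 + 4*e^2 - 2*r^2 - 2*Dv)*hr2
        + (-2*Dv - 2*(e^2 + a^2 - a*d) + 4*e^2 - 2*(d-a)^2)*hDveq
    have hrhs1 : (((d-2*a)/(2*Dv))*(d-a) - 1)*(4*Dv*(d-a)^2)
        = 2*(d-a)^3*(d-2*a) - 4*Dv*(d-a)^2 := by
      field_simp
      ring
    have hrhs2 : ((d-2*a)/(2*Dv))*e*(4*Dv*(d-a)^2) = 2*(d-a)^2*e*(d-2*a) := by
      field_simp
      ring
    have hrhs3 : (1 + ((d-2*a)/(2*Dv))*a)*(4*Dv*(d-a)^2)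
        = 4*Dv*(d-a)^2 + 2*(d-a)^2*a*(d-2*a) := by
      field_simp
      ring
    have sFn : ((d-a)^2 - (e+r)^2)*((d-a)^2*β [0, 0] + (d-a)*(e-r)*(β [0, 1] + β [1, 0]) + (e-r)^2*β [1, 1])
        + ((d-a)^2 - (e-r)^2)*((d-a)^2*β [0, 0] + (d-a)*(e+r)*(β [0, 1] + β [1, 0]) + (e+r)^2*β [1, 1])
        = 4*Dv*(d-a)^2 := by
      linear_combination (2*(d-a)*((d-a)^2 - e^2 + Dv))*lh + (4*Dv*(d-a)^2)*e10 + (4*Dv*(d-a)^2)*hnorm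
        + (-2*((d-a)^2*β [0, 0] + (d-a)*e*(β [0, 1] + β [1, 0]) + e^2*β [1, 1])
           + 4*e*((d-a)*(β [0, 1] + β [1, 0]) + 2*e*β [1, 1])
           + 2*β [1, 1]*((d-a)^2 - e^2 - r^2 - Dv))*hr2
        + ((-2*Dv - 2*(e^2 + a^2 - a*d) - 2*(d-a)^2 + 4*e^2 - 2*(d-a)*a)*β [1, 1])*hDveq
    rcases lt_or_ge 0 ((d-a)^2 - (e-r)^2) with homega | homega
    · refine construct β a d e hE1 hE2 (d-a) (e-r) (d-a) (e+r)
        ((d-a)^2 - (e+r)^2) ((d-a)^2 - (e-r)^2) ((d-2*a)/(2*Dv)) (d-a) (4*Dv*(d-a)^2)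
        hW homega ?_ ?_ ?_ ?_ ?_ ?_ ?_
      · ring
      · ring
      · linear_combination -hr2 - hDveq
      · rw [hrhs1]; linear_combination CI1c
      · rw [hrhs2]; linear_combination CI2c
      · rw [hrhs3]; linear_combination CI3c
      · intro h
        exact (mul_ne_zero hA0 (ne_of_gt hrpos)) (by linear_combination h/2)
    · have hα : 0 < (d-a)^2 - (e+r)^2 := by
        by_contra hno
        push_neg at hno
        have h1 := hq (d-a) (e-r)
        have h2 := hq (d-a) (e+r)
        nlinarith [mul_nonneg (neg_nonneg.mpr hno) h1, mul_nonneg (neg_nonneg.mpr homega) h2]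
      refine construct β a d e hE1 hE2 (d-a) (e+r) (d-a) (e-r)
        ((d-a)^2 - (e-r)^2) ((d-a)^2 - (e+r)^2) ((d-2*a)/(2*Dv)) (d-a) (4*Dv*(d-a)^2)
        hW hα ?_ ?_ ?_ ?_ ?_ ?_ ?_
      · ring
      · ring
      · linear_combination -hr2 - hDveq
      · rw [hrhs1]; linear_combination CI1c
      · rw [hrhs2]; linear_combination CI2c
      · rw [hrhs3]; linear_combination CI3c
      · intro h
        exact (mul_ne_zero hA0 (ne_of_gt hrpos)) (by linear_combination -h/2)
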